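/- Let A be the n×n lower triangular Toeplitz matrix over a PID as above, with submatrices A_c. Then for all 1 ≤ k ≤ c ≤ n/2, the ideal generated by the k×k minors of A_c equals the ideal generated by the k×k minors of A_k. -/

import Mathlib

open Matrix BigOperators Finset Equiv

/-- The `n × n` lower triangular Toeplitz matrix with `T(i,j) = h_{n-i+j}` for `i ≥ j`
(1-indexed), `0` otherwise. -/
def Toep {R : Type*} [CommRing R] (n : ℕ) (h : ℕ → R) : Matrix (Fin n) (Fin n) R :=
  Matrix.of fun i j => if (j : ℕ) ≤ (i : ℕ) then h (n - ((i : ℕ) + 1) + ((j : ℕ) + 1)) else 0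

/-- The `(n-c+1) × c` submatrix `A_c` of the Toeplitz matrix, on columns `1,…,c` and
rows `c,…,n` (1-indexed). -/
def Ac {R : Type*} [CommRing R] (n : ℕ) (h : ℕ → R) (c : ℕ) (hc1 : 1 ≤ c) (hcn : c ≤ n) :
    Matrix (Fin (n - c + 1)) (Fin c) R :=
  (Toep n h).submatrix
    (fun i => ⟨c - 1 + (i : ℕ), by have := i.isLt; omega⟩)
    (fun j => ⟨(j : ℕ), by have := j.isLt; omega⟩)

/-- The set of `k × k` minors of a matrix. -/
def minorsSet {R : Type*} [CommRing R] {p q : ℕ} (M : Matrix (Fin p) (Fin q) R) (k : ℕ) :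
    Set R :=
  {x | ∃ (f : Fin k → Fin p) (g : Fin k → Fin q),
    StrictMono f ∧ StrictMono g ∧ x = (M.submatrix f g).det}

namespace Stmt5Aux

variable {R : Type*} [CommRing R]

/-- Hankel-type determinant: `det [x (u a + v b)]`. -/
def Dd (x : ℕ → R) (k : ℕ) (u v : Fin k → ℕ) : R :=
  (Matrix.of fun a b : Fin k => x (u a + v b)).det

lemma Dd_congr (x : ℕ → R) (k : ℕ) {u v u' v' : Fin k → ℕ}
    (h : ∀ a b, u a + v b = u' a + v' b) : Dd x k u v = Dd x k u' v' := by
  unfold Dd; congr 1; ext a b; rw [Matrix.of_apply, Matrix.of_apply, h]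

lemma Dd_comm (x : ℕ → R) (k : ℕ) (u v : Fin k → ℕ) : Dd x k u v = Dd x k v u := by
  unfold Dd
  rw [← Matrix.det_transpose]
  congr 1; ext a b
  simp [Matrix.transpose, add_comm]

lemma Dd_rowPerm (x : ℕ → R) (k : ℕ) (σ : Perm (Fin k)) (u v : Fin k → ℕ) :
    Dd x k (u ∘ σ) v = ((Perm.sign σ : ℤ) : R) * Dd x k u v := by
  unfold Dd
  have : (Matrix.of fun a b : Fin k => x ((u ∘ σ) a + v b))
      = (Matrix.of fun a b : Fin k => x (u a + v b)).submatrix σ id := by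
    ext a b; simp
  rw [this, Matrix.det_permute]

lemma Dd_zero_of_row_eq (x : ℕ → R) (k : ℕ) {u : Fin k → ℕ} (v : Fin k → ℕ)
    {a a' : Fin k} (hne : a ≠ a') (huu : u a = u a') : Dd x k u v = 0 := by
  apply Matrix.det_zero_of_row_eq hne
  funext b; simp [huu]

lemma Dd_zero_of_col_eq (x : ℕ → R) (k : ℕ) (u : Fin k → ℕ) {v : Fin k → ℕ}
    {b b' : Fin k} (hne : b ≠ b') (hvv : v b = v b') : Dd x k u v = 0 := by
  rw [Dd_comm]; exact Dd_zero_of_row_eq x k u hne hvv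

lemma mem_of_unit_mul {I : Ideal R} {y : R} (ε : ℤˣ) (h : ((ε : ℤ) : R) * y ∈ I) : y ∈ I := by
  rcases Int.units_eq_one_or ε with h1 | h1 <;> rw [h1] at h <;> simpa using h

lemma unit_mul_mem {I : Ideal R} {y : R} (ε : ℤˣ) (h : y ∈ I) : ((ε : ℤ) : R) * y ∈ I :=
  Ideal.mul_mem_left _ _ h

/-- The master exchange identity. -/
lemma master (x : ℕ → R) (k : ℕ) (u v : Fin k → ℕ) (m : ℕ) :
    ∑ A ∈ powersetCard m (univ : Finset (Fin k)),
      Dd x k (fun a => u a + if a ∈ A then 1 else 0) v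
    = ∑ B ∈ powersetCard m (univ : Finset (Fin k)),
      Dd x k u (fun b => v b + if b ∈ B then 1 else 0) := by
  unfold Dd
  simp only [Matrix.det_apply]
  rw [Finset.sum_comm, Finset.sum_comm (s := powersetCard m (univ : Finset (Fin k)))]
  refine Finset.sum_congr rfl fun σ _ => ?_
  rw [← Finset.smul_sum, ← Finset.smul_sum]
  congr 1
  refine Finset.sum_nbij' (fun A => A.map σ.symm.toEmbedding)
    (fun B => B.map σ.toEmbedding) ?_ ?_ ?_ ?_ ?_
  · intro A hA
    simp only [Finset.mem_powersetCard] at hA ⊢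
    exact ⟨Finset.subset_univ _, by rw [Finset.card_map]; exact hA.2⟩
  · intro B hB
    simp only [Finset.mem_powersetCard] at hB ⊢
    exact ⟨Finset.subset_univ _, by rw [Finset.card_map]; exact hB.2⟩
  · intro A _
    ext a
    simp
  · intro B _
    ext b
    simp
  · intro A _
    refine Finset.prod_congr rfl fun i _ => ?_
    simp only [Matrix.of_apply, Finset.mem_map_equiv, Equiv.symm_symm]
    congr 1
    by_cases h : σ i ∈ A <;> simp [h] <;> omega

/-- measure -/
def mu (k : ℕ) (v : Fin k → ℕ) : ℕ := ∑ b, 2 ^ (v b)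

lemma mu_comp_perm (k : ℕ) (σ : Perm (Fin k)) (v : Fin k → ℕ) : mu k (v ∘ σ) = mu k v :=
  Equiv.sum_comp σ (fun b => 2 ^ v b)

lemma one_le_mu {k : ℕ} (hk : 1 ≤ k) (v : Fin k → ℕ) : 1 ≤ mu k v := by
  have h0 : (⟨0, by omega⟩ : Fin k) ∈ (univ : Finset (Fin k)) := mem_univ _
  calc 1 ≤ 2 ^ v ⟨0, by omega⟩ := Nat.one_le_two_pow
  _ ≤ mu k v := Finset.single_le_sum (f := fun b => 2 ^ v b) (fun i _ => Nat.zero_le _) h0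

/-- the decremented column tuple -/
def wfun {k : ℕ} (v : Fin k → ℕ) (j : ℕ) : Fin k → ℕ :=
  fun b => if j < (b : ℕ) then v b - 1 else v b

/-- the top block -/
def B0 (k j : ℕ) : Finset (Fin k) := univ.filter (fun b : Fin k => j < (b : ℕ))

section CoreStep

variable {k : ℕ} {v : Fin k → ℕ} {j : ℕ}

lemma B0_card (k j : ℕ) (hj : j + 1 ≤ k) : (B0 k j).card = k - (j + 1) := by
  classical
  have himg : B0 k j = Finset.image
      (fun i : Fin (k - (j+1)) => (⟨j + 1 + (i : ℕ), by omega⟩ : Fin k)) univ := by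
    ext b
    simp only [B0, Finset.mem_filter, Finset.mem_univ, true_and, Finset.mem_image]
    constructor
    · intro hb
      refine ⟨⟨(b : ℕ) - (j+1), by omega⟩, ?_⟩
      exact Fin.ext (show j + 1 + ((b : ℕ) - (j+1)) = (b : ℕ) by omega)
    · rintro ⟨i, rfl⟩
      show j < j + 1 + (i : ℕ)
      omega
  rw [himg, Finset.card_image_of_injective _ (fun i i' hii' => by
    have : j + 1 + (i : ℕ) = j + 1 + (i' : ℕ) := congrArg Fin.val hii'
    exact Fin.ext (by omega)), Finset.card_univ, Fintype.card_fin]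

lemma B0_mem (hj : j + 1 < k) : B0 k j ∈ powersetCard (k - 1 - j) (univ : Finset (Fin k)) := by
  rw [Finset.mem_powersetCard]
  exact ⟨Finset.subset_univ _, by rw [B0_card k j (by omega)]; omega⟩

lemma w_add_B0 (hv : StrictMono v) (hj : j + 1 < k) :
    (fun b => wfun v j b + if b ∈ B0 k j then 1 else 0) = v := by
  funext b
  simp only [wfun, B0, Finset.mem_filter, Finset.mem_univ, true_and]
  by_cases hb : j < (b : ℕ)
  · have hvb : v ⟨j, by omega⟩ < v b := hv (by rw [Fin.lt_def]; exact hb)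
    rw [if_pos hb, if_pos hb]; omega
  · rw [if_neg hb, if_neg hb, add_zero]

/-- The core reduction step: a gapped determinant as a combination. -/
lemma core (x : ℕ → R) (u : Fin k → ℕ) (hv : StrictMono v) (hj : j + 1 < k)
    (hgap : v ⟨j, by omega⟩ + 1 < v ⟨j + 1, hj⟩) :
    Dd x k u v =
      (∑ A ∈ powersetCard (k - 1 - j) (univ : Finset (Fin k)),
        Dd x k (fun a => u a + if a ∈ A then 1 else 0) (wfun v j))
      - ∑ B ∈ (powersetCard (k - 1 - j) (univ : Finset (Fin k))).erase (B0 k j),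
          Dd x k u (fun b => wfun v j b + if b ∈ B then 1 else 0) := by
  have h1 := master x k u (wfun v j) (k - 1 - j)
  have h2 := (Finset.add_sum_erase (powersetCard (k - 1 - j) (univ : Finset (Fin k)))
      (fun B => Dd x k u (fun b => wfun v j b + if b ∈ B then 1 else 0)) (B0_mem hj)).symm
  try simp only [] at h2
  rw [h2] at h1
  rw [w_add_B0 hv hj] at h1
  linear_combination -h1

lemma mu_w_lt (hv : StrictMono v) (hj : j + 1 < k) : mu k (wfun v j) < mu k v := by
  apply Finset.sum_lt_sum (fun b _ => Nat.pow_le_pow_right (by omega) (by unfold wfun; split <;> omega))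
  refine ⟨⟨k - 1, by omega⟩, mem_univ _, ?_⟩
  have h1 : j < k - 1 := by omega
  have h2 : v ⟨j, by omega⟩ < v ⟨k - 1, by omega⟩ := hv (by rw [Fin.lt_def]; exact h1)
  apply Nat.pow_lt_pow_right (by omega)
  simp only [wfun, if_pos h1]
  omega

lemma sum_pow_lt (hv : StrictMono v) (hj : j < k) (S : Finset (Fin k))
    (hS : ∀ b ∈ S, (b : ℕ) ≤ j) : ∑ b ∈ S, 2 ^ v b < 2 ^ (v ⟨j, hj⟩ + 1) := by
  have e1 : ∑ b ∈ S, 2 ^ v b = ∑ i ∈ S.image v, 2 ^ i :=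
    (Finset.sum_image (fun a _ a' _ haa' => hv.injective haa')).symm
  have e2 : S.image v ⊆ Finset.range (v ⟨j, hj⟩ + 1) := by
    intro i hi
    rw [Finset.mem_image] at hi
    obtain ⟨b, hb, rfl⟩ := hi
    rw [Finset.mem_range]
    have : v b ≤ v ⟨j, hj⟩ := hv.monotone (by rw [Fin.le_def]; exact hS b hb)
    omega
  have e3 : ∀ N : ℕ, ∑ i ∈ Finset.range N, 2 ^ i = 2 ^ N - 1 := by
    intro N
    induction N with
    | zero => simp
    | succ N ih =>
      rw [Finset.sum_range_succ, ih]
      have := Nat.one_le_two_pow (n := N)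
      have : (2:ℕ) ^ (N+1) = 2 ^ N + 2 ^ N := by ring
      omega
  rw [e1]
  calc ∑ i ∈ S.image v, 2 ^ i ≤ ∑ i ∈ Finset.range (v ⟨j, hj⟩ + 1), 2 ^ i :=
        Finset.sum_le_sum_of_subset e2
    _ = 2 ^ (v ⟨j, hj⟩ + 1) - 1 := e3 _
    _ < _ := by have := Nat.one_le_two_pow (n := v ⟨j, hj⟩ + 1); omega

lemma mu_wB_lt (hv : StrictMono v) (hj : j + 1 < k)
    (hgap : v ⟨j, by omega⟩ + 1 < v ⟨j + 1, hj⟩)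
    (B : Finset (Fin k)) (hB : B ∈ (powersetCard (k - 1 - j) (univ : Finset (Fin k))).erase (B0 k j)) :
    mu k (fun b => wfun v j b + if b ∈ B then 1 else 0) < mu k v := by
  rw [Finset.mem_erase, Finset.mem_powersetCard] at hB
  obtain ⟨hBne, -, hBcard⟩ := hB
  have key : ∀ (T : Finset (Fin k)),
      mu k (fun b => wfun v j b + if b ∈ T then 1 else 0)
        = mu k (wfun v j) + ∑ b ∈ T, 2 ^ (wfun v j b) := by
    intro T
    have hterm : ∀ b : Fin k, 2 ^ (wfun v j b + if b ∈ T then 1 else 0)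
        = 2 ^ (wfun v j b) + (if b ∈ T then 2 ^ (wfun v j b) else 0) := by
      intro b
      by_cases hb : b ∈ T
      · rw [if_pos hb, if_pos hb, pow_succ]; ring
      · rw [if_neg hb, if_neg hb, add_zero, add_zero]
    unfold mu
    rw [Finset.sum_congr rfl (fun b _ => hterm b), Finset.sum_add_distrib,
      Finset.sum_ite_mem, Finset.univ_inter]
  have e2 : mu k v = mu k (wfun v j) + ∑ b ∈ B0 k j, 2 ^ (wfun v j b) := by
    conv_lhs => rw [← w_add_B0 hv hj]
    exact key (B0 k j)
  rw [key B, e2]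
  apply Nat.add_lt_add_left
  have hsplit1 := Finset.sum_inter_add_sum_sdiff B (B0 k j) (fun b => 2 ^ wfun v j b)
  have hsplit2 := Finset.sum_inter_add_sum_sdiff (B0 k j) B (fun b => 2 ^ wfun v j b)
  have hIC : B ∩ B0 k j = B0 k j ∩ B := Finset.inter_comm _ _
  rw [hIC] at hsplit1
  have hne : (B0 k j \ B).Nonempty := by
    rw [Finset.sdiff_nonempty]
    intro hsub
    exact hBne (Finset.eq_of_subset_of_card_le hsub
      (by rw [hBcard, B0_card k j (by omega)]; omega)).symm
  obtain ⟨bs, hbsmem⟩ := hne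
  have hbs := Finset.mem_sdiff.mp hbsmem
  have hbsj : j < (bs : ℕ) := by
    have := hbs.1
    simp only [B0, Finset.mem_filter, Finset.mem_univ, true_and] at this
    exact this
  have h1 : 2 ^ (v ⟨j, by omega⟩ + 1) ≤ ∑ b ∈ B0 k j \ B, 2 ^ wfun v j b := by
    calc 2 ^ (v ⟨j, by omega⟩ + 1) ≤ 2 ^ wfun v j bs := by
          apply Nat.pow_le_pow_right (by omega)
          have hmono : v ⟨j + 1, hj⟩ ≤ v bs := hv.monotone (by rw [Fin.le_def]; exact hbsj)
          simp only [wfun, if_pos hbsj]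
          omega
      _ ≤ _ := Finset.single_le_sum (f := fun b => 2 ^ wfun v j b)
          (fun i _ => Nat.zero_le _) hbsmem
  have h2 : ∑ b ∈ B \ B0 k j, 2 ^ wfun v j b < 2 ^ (v ⟨j, by omega⟩ + 1) := by
    have hmem : ∀ b ∈ B \ B0 k j, (b : ℕ) ≤ j := by
      intro b hb
      have := (Finset.mem_sdiff.mp hb).2
      simp only [B0, Finset.mem_filter, Finset.mem_univ, true_and] at this
      omega
    have hcongr : ∀ b ∈ B \ B0 k j, 2 ^ wfun v j b = 2 ^ v b := by
      intro b hb
      have := hmem b hb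
      simp only [wfun, if_neg (by omega : ¬ j < (b : ℕ))]
    rw [Finset.sum_congr rfl hcongr]
    exact sum_pow_lt hv (by omega) _ hmem
  omega

lemma CpresA (n1 : ℕ) (u : Fin k → ℕ) (hv : StrictMono v) (hj : j + 1 < k)
    (hC : ∀ a b, u a + v b ≤ n1) (A : Finset (Fin k)) :
    ∀ a b, (u a + if a ∈ A then 1 else 0) + wfun v j b ≤ n1 := by
  intro a b
  by_cases hb : j < (b : ℕ)
  · have := hC a b
    have h1 : v ⟨j, by omega⟩ < v b := hv (by rw [Fin.lt_def]; exact hb)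
    simp only [wfun, if_pos hb]
    split <;> omega
  · simp only [wfun, if_neg hb]
    have hb2 : (b : ℕ) + 1 < k := by omega
    have h2 : v b < v ⟨(b : ℕ) + 1, hb2⟩ := hv (by rw [Fin.lt_def]; simp)
    have := hC a ⟨(b : ℕ) + 1, hb2⟩
    split <;> omega

lemma CpresB (n1 : ℕ) (u : Fin k → ℕ) (hv : StrictMono v) (hj : j + 1 < k)
    (hC : ∀ a b, u a + v b ≤ n1) (B : Finset (Fin k)) :
    ∀ a b, u a + (wfun v j b + if b ∈ B then 1 else 0) ≤ n1 := by
  intro a b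
  by_cases hb : j < (b : ℕ)
  · have := hC a b
    have h1 : v ⟨j, by omega⟩ < v b := hv (by rw [Fin.lt_def]; exact hb)
    simp only [wfun, if_pos hb]
    split <;> omega
  · simp only [wfun, if_neg hb]
    have hb2 : (b : ℕ) + 1 < k := by omega
    have h2 : v b < v ⟨(b : ℕ) + 1, hb2⟩ := hv (by rw [Fin.lt_def]; simp)
    have h3 := hC a ⟨(b : ℕ) + 1, hb2⟩
    have := hC a b
    split <;> omega

lemma consec_bound (hv : StrictMono v) (hk : 1 ≤ k)
    (hng : ∀ j (hj : j + 1 < k), ¬ (v ⟨j, by omega⟩ + 1 < v ⟨j + 1, hj⟩)) :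
    ∀ i (hi : i < k), v ⟨i, hi⟩ ≤ v ⟨0, by omega⟩ + i := by
  intro i
  induction i with
  | zero => intro hi; exact Nat.le_add_right _ 0
  | succ i ih =>
    intro hi
    have hik : i < k := by omega
    have h1 : ¬ (v ⟨i, hik⟩ + 1 < v ⟨i + 1, hi⟩) := hng i hi
    have h2 : v ⟨i, hik⟩ < v ⟨i + 1, hi⟩ := hv (Fin.mk_lt_mk.mpr (by omega))
    have h3 := ih hik
    omega

lemma exists_gap (hv : StrictMono v) (hk : 1 ≤ k)
    (hspread : v ⟨0, by omega⟩ + (k - 1) < v ⟨k - 1, by omega⟩) :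
    ∃ j, ∃ (hj : j + 1 < k), v ⟨j, by omega⟩ + 1 < v ⟨j + 1, hj⟩ := by
  by_contra hcon
  push_neg at hcon
  have hb := consec_bound hv hk (fun j hj => by have := hcon j hj; omega)
  have h2 := hb (k - 1) (by omega)
  omega

end CoreStep

section Fit
variable (n : ℕ) (h : ℕ → R) (k c : ℕ)

lemma exists_sort (k : ℕ) (u : Fin k → ℕ) (hu : Function.Injective u) :
    ∃ σ : Perm (Fin k), StrictMono (u ∘ σ) :=
  ⟨Tuple.sort u, (Tuple.monotone_sort u).strictMono_of_injective
    (hu.comp (Tuple.sort u).injective)⟩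

lemma fit (hk : 1 ≤ k) (hkc : k ≤ c) (hcn : 2 * c ≤ n) (hc1 : 1 ≤ c) (hcn' : c ≤ n)
    (u v : Fin k → ℕ) (hu : StrictMono u) (hv : StrictMono v)
    (hC : ∀ a b, u a + v b ≤ n - 1)
    (hus : u ⟨k - 1, by omega⟩ ≤ u ⟨0, by omega⟩ + (n - c))
    (hvs : v ⟨k - 1, by omega⟩ ≤ v ⟨0, by omega⟩ + (c - 1)) :
    Dd (fun m => h (m + 1)) k u v ∈ Ideal.span (minorsSet (Ac n h c hc1 hcn') k) := by
  obtain ⟨x, hx⟩ : ∃ x : ℕ → R, x = fun m => h (m + 1) := ⟨_, rfl⟩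
  rw [show (fun m => h (m + 1)) = x from hx.symm]
  obtain ⟨t, ht⟩ : ∃ t : ℕ, t = v ⟨k - 1, by omega⟩ - (c - 1) := ⟨_, rfl⟩
  obtain ⟨t2, ht2⟩ : ∃ t2 : ℕ, t2 = (u ⟨k - 1, by omega⟩ + t) - (n - c) := ⟨_, rfl⟩
  obtain ⟨u2, hu2⟩ : ∃ u2 : Fin k → ℕ, u2 = fun a => u a + t - t2 := ⟨_, rfl⟩
  obtain ⟨v2, hv2⟩ : ∃ v2 : Fin k → ℕ, v2 = fun b => v b - t + t2 := ⟨_, rfl⟩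
  have hle : ∀ a : Fin k, u a ≤ u ⟨k - 1, by omega⟩ := fun a =>
    hu.monotone (Fin.le_def.mpr (show (a : ℕ) ≤ k - 1 by have := a.isLt; omega))
  have hvle : ∀ b : Fin k, v b ≤ v ⟨k - 1, by omega⟩ := fun b =>
    hv.monotone (Fin.le_def.mpr (show (b : ℕ) ≤ k - 1 by have := b.isLt; omega))
  have hv0 : ∀ b : Fin k, v ⟨0, by omega⟩ ≤ v b := fun b =>
    hv.monotone (Fin.le_def.mpr (show 0 ≤ (b : ℕ) by omega))
  have hu0 : ∀ a : Fin k, u ⟨0, by omega⟩ ≤ u a := fun a =>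
    hu.monotone (Fin.le_def.mpr (show 0 ≤ (a : ℕ) by omega))
  have htv : ∀ b, t ≤ v b := fun b => by have := hv0 b; omega
  have ht2u : ∀ a, t2 ≤ u a + t := fun a => by have := hu0 a; have := hle a; omega
  have hsum : ∀ a b, u2 a + v2 b = u a + v b := fun a b => by
    have := htv b; have := ht2u a; simp only [hu2, hv2]; omega
  have hCkk := hC ⟨k - 1, by omega⟩ ⟨k - 1, by omega⟩
  have hu2top : ∀ a, u2 a ≤ n - c := fun a => by
    have := hle a; simp only [hu2]; omega
  have hv2top : ∀ b, v2 b ≤ c - 1 := fun b => by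
    have := hvle b; have := htv b; simp only [hv2]; omega
  have hu2mono : StrictMono u2 := fun a a' haa' => by
    have h1 := hu haa'; have := ht2u a; have := ht2u a'
    simp only [hu2]; omega
  have hv2mono : StrictMono v2 := fun b b' hbb' => by
    have h1 := hv hbb'; have := htv b; have := htv b'
    simp only [hv2]; omega
  obtain ⟨f, hfd⟩ : ∃ f : Fin k → Fin (n - c + 1),
      f = fun a => (⟨(n - c) - u2 (Fin.rev a), by omega⟩ : Fin (n - c + 1)) := ⟨_, rfl⟩
  obtain ⟨g, hgd⟩ : ∃ g : Fin k → Fin c,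
      g = fun b => (⟨v2 b, by have := hv2top b; omega⟩ : Fin c) := ⟨_, rfl⟩
  have hfval : ∀ a, (f a : ℕ) = (n - c) - u2 (Fin.rev a) := fun a => by rw [hfd]
  have hgval : ∀ b, (g b : ℕ) = v2 b := fun b => by rw [hgd]
  have hfmono : StrictMono f := by
    intro a a' haa'
    have h1 : Fin.rev a' < Fin.rev a := Fin.rev_lt_rev.mpr haa'
    have h2 : u2 (Fin.rev a') < u2 (Fin.rev a) := hu2mono h1
    have h3 := hu2top (Fin.rev a)
    rw [Fin.lt_def, hfval, hfval]
    omega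
  have hgmono : StrictMono g := fun b b' hbb' => by
    rw [Fin.lt_def, hgval, hgval]; exact hv2mono hbb'
  have hminor : ((Ac n h c hc1 hcn').submatrix f g).det ∈ minorsSet (Ac n h c hc1 hcn') k :=
    ⟨f, g, hfmono, hgmono, rfl⟩
  have hmat : (Ac n h c hc1 hcn').submatrix f g
      = (Matrix.of fun a b : Fin k => x (u2 a + v2 b)).submatrix (Fin.revPerm : Perm (Fin k)) id := by
    ext a b
    simp only [Ac, Toep, Matrix.submatrix_apply, Matrix.of_apply, Fin.revPerm_apply, id_eq]
    have hcond : (↑(g b) : ℕ) ≤ c - 1 + (↑(f a) : ℕ) := by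
      rw [hfval, hgval]
      have := hv2top b; omega
    rw [if_pos hcond, hx]
    show h (n - (c - 1 + (↑(f a) : ℕ) + 1) + ((↑(g b) : ℕ) + 1)) = h (u2 (Fin.rev a) + v2 b + 1)
    congr 1
    rw [hfval, hgval]
    have := hu2top (Fin.rev a)
    omega
  have hdet : ((Ac n h c hc1 hcn').submatrix f g).det
      = ((Perm.sign (Fin.revPerm : Perm (Fin k)) : ℤ) : R) * Dd x k u2 v2 := by
    rw [hmat]
    exact Matrix.det_permute _ _
  have hDd2 : Dd x k u2 v2 = Dd x k u v := Dd_congr x k hsum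
  have hfinal : Dd x k u v
      = ((Perm.sign (Fin.revPerm : Perm (Fin k)) : ℤ) : R) * ((Ac n h c hc1 hcn').submatrix f g).det := by
    rw [hdet, hDd2, ← mul_assoc]
    rcases Int.units_eq_one_or (Perm.sign (Fin.revPerm : Perm (Fin k))) with h1 | h1 <;>
      rw [h1] <;> simp
  rw [hfinal]
  exact Ideal.mul_mem_left _ _ (Ideal.subset_span hminor)

lemma minor_eq_Dd (hk : 1 ≤ k) (hc1 : 1 ≤ c) (hcn' : c ≤ n)
    (f : Fin k → Fin (n - c + 1)) (g : Fin k → Fin c) (hf : StrictMono f) (hg : StrictMono g) :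
    ∃ u v : Fin k → ℕ, StrictMono u ∧ StrictMono v ∧ (∀ a b, u a + v b ≤ n - 1) ∧
      ((Ac n h c hc1 hcn').submatrix f g).det
        = ((Perm.sign (Fin.revPerm : Perm (Fin k)) : ℤ) : R) * Dd (fun m => h (m + 1)) k u v := by
  set x : ℕ → R := fun m => h (m + 1) with hx
  set u : Fin k → ℕ := fun a => (n - c) - (f (Fin.rev a) : ℕ) with hudef
  set v : Fin k → ℕ := fun b => (g b : ℕ) with hvdef
  have hfb : ∀ a : Fin k, (f a : ℕ) ≤ n - c := fun a => by have := (f a).isLt; omega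
  have humono : StrictMono u := fun a a' haa' => by
    have h1 : Fin.rev a' < Fin.rev a := Fin.rev_lt_rev.mpr haa'
    have h2 : f (Fin.rev a') < f (Fin.rev a) := hf h1
    rw [Fin.lt_def] at h2
    have := hfb (Fin.rev a)
    simp only [hudef]
    omega
  have hvmono : StrictMono v := fun b b' hbb' => by
    have := hg hbb'; rw [Fin.lt_def] at this
    simp only [hvdef]; exact this
  have hC : ∀ a b, u a + v b ≤ n - 1 := fun a b => by
    have := hfb (Fin.rev a); have := (g b).isLt
    simp only [hudef, hvdef]; omega
  refine ⟨u, v, humono, hvmono, hC, ?_⟩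
  have hmat : (Ac n h c hc1 hcn').submatrix f g
      = (Matrix.of fun a b : Fin k => x (u a + v b)).submatrix (Fin.revPerm : Perm (Fin k)) id := by
    ext a b
    simp only [Ac, Toep, Matrix.submatrix_apply, Matrix.of_apply, Fin.revPerm_apply, id_eq]
    have hcond : ((g b : ℕ)) ≤ c - 1 + (f a : ℕ) := by have := (g b).isLt; omega
    rw [if_pos hcond]
    show h (n - (c - 1 + (f a : ℕ) + 1) + ((g b : ℕ) + 1)) = x (u (Fin.rev a) + v b)
    rw [hx]
    have hrr : u (Fin.rev a) = (n - c) - (f a : ℕ) := by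
      simp only [hudef, Fin.rev_rev]
    rw [hrr]
    congr 1
    have := hfb a
    have := (g b).isLt
    simp only [hvdef]
    omega
  rw [hmat, Matrix.det_permute]
  rfl

lemma Dd_colPerm (x : ℕ → R) (k : ℕ) (τ : Perm (Fin k)) (u v : Fin k → ℕ) :
    Dd x k u (v ∘ τ) = ((Perm.sign τ : ℤ) : R) * Dd x k u v := by
  rw [Dd_comm, Dd_rowPerm, Dd_comm]

lemma mem_of_perm (x : ℕ → R) (k : ℕ) {I : Ideal R} (u v : Fin k → ℕ) (σ τ : Perm (Fin k))
    (hm : Dd x k (u ∘ σ) (v ∘ τ) ∈ I) : Dd x k u v ∈ I := by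
  rw [Dd_rowPerm, Dd_colPerm] at hm
  exact mem_of_unit_mul (Perm.sign τ) (mem_of_unit_mul (Perm.sign σ) hm)

lemma inner (hk : 1 ≤ k) (hkc : k ≤ c) (hcn : 2 * c ≤ n) (hc1 : 1 ≤ c) (hcn' : c ≤ n) :
    ∀ (N : ℕ) (u v : Fin k → ℕ), mu k u ≤ N → (∀ a b, u a + v b ≤ n - 1) →
      (∀ b b', v b ≤ v b' + (c - 1)) →
      Dd (fun m => h (m + 1)) k u v ∈ Ideal.span (minorsSet (Ac n h c hc1 hcn') k) := by
  intro N
  induction N with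
  | zero =>
    intro u v hmu _ _
    exact absurd (le_trans (one_le_mu hk u) hmu) (by omega)
  | succ N IH =>
    intro u v hmu hC hsp
    by_cases hui : Function.Injective u
    swap
    · obtain ⟨a, a', heq, hne⟩ := Function.not_injective_iff.mp hui
      rw [Dd_zero_of_row_eq _ k v hne heq]
      exact Ideal.zero_mem _
    by_cases hvi : Function.Injective v
    swap
    · obtain ⟨b, b', heq, hne⟩ := Function.not_injective_iff.mp hvi
      rw [Dd_zero_of_col_eq _ k u hne heq]
      exact Ideal.zero_mem _
    obtain ⟨σ, hσ⟩ := exists_sort k u hui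
    obtain ⟨τ, hτ⟩ := exists_sort k v hvi
    apply mem_of_perm _ k u v σ τ
    obtain ⟨u', hu'⟩ : ∃ u' : Fin k → ℕ, u' = u ∘ σ := ⟨_, rfl⟩
    obtain ⟨v', hv'⟩ : ∃ v' : Fin k → ℕ, v' = v ∘ τ := ⟨_, rfl⟩
    rw [← hu', ← hv']
    rw [← hu'] at hσ
    rw [← hv'] at hτ
    have hmu' : mu k u' ≤ N + 1 := by rw [hu', mu_comp_perm]; exact hmu
    have hC' : ∀ a b, u' a + v' b ≤ n - 1 := by
      intro a b; rw [hu', hv']; exact hC _ _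
    have hsp' : ∀ b b', v' b ≤ v' b' + (c - 1) := by
      intro b b'; rw [hv']; exact hsp _ _
    clear hu' hv' hmu hC hsp hui hvi
    by_cases hfit : u' ⟨k - 1, by omega⟩ ≤ u' ⟨0, by omega⟩ + (n - c)
    · exact fit n h k c hk hkc hcn hc1 hcn' u' v' hσ hτ hC' hfit (hsp' _ _)
    · have hspread : u' ⟨0, by omega⟩ + (k - 1) < u' ⟨k - 1, by omega⟩ := by omega
      obtain ⟨j, hj, hgap⟩ := exists_gap hσ hk hspread
      have hC'' : ∀ a b, v' a + u' b ≤ n - 1 := fun a b => by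
        have := hC' b a; omega
      have hsp2 : ∀ b b', v' b + 1 ≤ v' b' + (c - 1) := by
        intro b b'
        have h1 := hC' ⟨k - 1, by omega⟩ b
        omega
      rw [Dd_comm, core _ v' hσ hj hgap]
      apply Ideal.sub_mem
      · apply Ideal.sum_mem
        intro A hA
        rw [Dd_comm]
        apply IH
        · have := mu_w_lt hσ hj; omega
        · intro a b
          have := CpresA (n - 1) v' hσ hj hC'' A b a
          omega
        · intro b b'
          have h1 := hsp2 b b'
          have h2 := hsp' b b'
          by_cases hb : b ∈ A <;> by_cases hb' : b' ∈ A <;> simp only [hb, hb', if_pos, if_neg,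
            if_true, if_false] <;> omega
      · apply Ideal.sum_mem
        intro B hB
        rw [Dd_comm]
        apply IH
        · have := mu_wB_lt hσ hj hgap B hB; omega
        · intro a b
          have := CpresB (n - 1) v' hσ hj hC'' B b a
          omega
        · exact hsp'

lemma outer (hk : 1 ≤ k) (hkc : k ≤ c) (hcn : 2 * c ≤ n) (hc1 : 1 ≤ c) (hcn' : c ≤ n) :
    ∀ (N : ℕ) (u v : Fin k → ℕ), mu k v ≤ N → (∀ a b, u a + v b ≤ n - 1) →
      Dd (fun m => h (m + 1)) k u v ∈ Ideal.span (minorsSet (Ac n h c hc1 hcn') k) := by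
  intro N
  induction N with
  | zero =>
    intro u v hmu _
    exact absurd (le_trans (one_le_mu hk v) hmu) (by omega)
  | succ N IH =>
    intro u v hmu hC
    by_cases hui : Function.Injective u
    swap
    · obtain ⟨a, a', heq, hne⟩ := Function.not_injective_iff.mp hui
      rw [Dd_zero_of_row_eq _ k v hne heq]
      exact Ideal.zero_mem _
    by_cases hvi : Function.Injective v
    swap
    · obtain ⟨b, b', heq, hne⟩ := Function.not_injective_iff.mp hvi
      rw [Dd_zero_of_col_eq _ k u hne heq]
      exact Ideal.zero_mem _
    obtain ⟨σ, hσ⟩ := exists_sort k u hui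
    obtain ⟨τ, hτ⟩ := exists_sort k v hvi
    apply mem_of_perm _ k u v σ τ
    obtain ⟨u', hu'⟩ : ∃ u' : Fin k → ℕ, u' = u ∘ σ := ⟨_, rfl⟩
    obtain ⟨v', hv'⟩ : ∃ v' : Fin k → ℕ, v' = v ∘ τ := ⟨_, rfl⟩
    rw [← hu', ← hv']
    rw [← hu'] at hσ
    rw [← hv'] at hτ
    have hmu' : mu k v' ≤ N + 1 := by rw [hv', mu_comp_perm]; exact hmu
    have hC' : ∀ a b, u' a + v' b ≤ n - 1 := by
      intro a b; rw [hu', hv']; exact hC _ _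
    clear hu' hv' hmu hC hui hvi
    by_cases hsp : v' ⟨k - 1, by omega⟩ ≤ v' ⟨0, by omega⟩ + (c - 1)
    · apply inner n h k c hk hkc hcn hc1 hcn' (mu k u') u' v' le_rfl hC'
      intro b b'
      have h1 : v' b ≤ v' ⟨k - 1, by omega⟩ :=
        hτ.monotone (Fin.le_def.mpr (show (b : ℕ) ≤ k - 1 by have := b.isLt; omega))
      have h2 : v' ⟨0, by omega⟩ ≤ v' b' :=
        hτ.monotone (Fin.le_def.mpr (show 0 ≤ (b' : ℕ) by omega))
      omega
    · have hspread : v' ⟨0, by omega⟩ + (k - 1) < v' ⟨k - 1, by omega⟩ := by omega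
      obtain ⟨j, hj, hgap⟩ := exists_gap hτ hk hspread
      rw [core _ u' hτ hj hgap]
      apply Ideal.sub_mem
      · apply Ideal.sum_mem
        intro A hA
        apply IH
        · have := mu_w_lt hτ hj; omega
        · exact CpresA (n - 1) u' hτ hj hC' A
      · apply Ideal.sum_mem
        intro B hB
        apply IH
        · have := mu_wB_lt hτ hj hgap B hB; omega
        · exact CpresB (n - 1) u' hτ hj hC' B

end Fit

lemma stmt5aux (n : ℕ) (h : ℕ → R) (k c : ℕ) (hk : 1 ≤ k) (hkc : k ≤ c) (hcn : 2 * c ≤ n)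
    (p1 : 1 ≤ c) (p2 : c ≤ n) (q1 : 1 ≤ k) (q2 : k ≤ n) :
    Ideal.span (minorsSet (Ac n h c p1 p2) k) = Ideal.span (minorsSet (Ac n h k q1 q2) k) := by
  apply le_antisymm
  · rw [Ideal.span_le]
    rintro y ⟨f, g, hf, hg, rfl⟩
    obtain ⟨u, v, hu, hv, hC, heq⟩ := minor_eq_Dd n h k c hk p1 p2 f g hf hg
    rw [heq]
    exact SetLike.mem_coe.mpr (unit_mul_mem _
      (outer n h k k hk le_rfl (by omega) q1 q2 (mu k v) u v le_rfl hC))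
  · rw [Ideal.span_le]
    rintro y ⟨f, g, hf, hg, rfl⟩
    obtain ⟨u, v, hu, hv, hC, heq⟩ := minor_eq_Dd n h k k hk q1 q2 f g hf hg
    rw [heq]
    exact SetLike.mem_coe.mpr (unit_mul_mem _
      (outer n h k c hk hkc hcn p1 p2 (mu k v) u v le_rfl hC))

end Stmt5Aux

/-- For `1 ≤ k ≤ c ≤ n/2`, the ideal generated by the `k × k` minors of `A_c`
equals the ideal generated by the `k × k` minors of `A_k`. -/
theorem stmt5 {R : Type*} [CommRing R] [IsDomain R] [IsPrincipalIdealRing R]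
    (n : ℕ) (h : ℕ → R) (k c : ℕ) (hk : 1 ≤ k) (hkc : k ≤ c) (hcn : 2 * c ≤ n) :
    Ideal.span (minorsSet (Ac n h c (by omega) (by omega)) k)
      = Ideal.span (minorsSet (Ac n h k (by omega) (by omega)) k) := by
  exact Stmt5Aux.stmt5aux n h k c hk hkc hcn _ _ _ _
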